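/- The matrix B = I - 2Z_d + Z is positive semidefinite when W is symmetric, row stochastic with nonnegative off-diagonal entries satisfying w_{ii} ≥ 1/2 for all i. -/

import Mathlib

open Matrix
open scoped Kronecker

private lemma sum_col_aux (n : ℕ) (W : Matrix (Fin n) (Fin n) ℝ)
    (hs : ∀ i j, W j i = W i j) (hr : ∀ i, ∑ j, W i j = 1) (f : Fin n → ℝ) :
    ∑ i, ∑ j, W i j * f j = ∑ j, f j := by
  rw [Finset.sum_comm]
  refine Finset.sum_congr rfl fun j _ => ?_
  rw [← Finset.sum_mul,
    show (∑ i, W i j) = ∑ i, W j i from Finset.sum_congr rfl fun i _ => hs j i,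
    hr, one_mul]

private lemma quad_nonneg (n : ℕ) (W : Matrix (Fin n) (Fin n) ℝ)
    (hs : ∀ i j, W j i = W i j) (hr : ∀ i, ∑ j, W i j = 1)
    (hnn : ∀ i j, 0 ≤ W i j) (x : Fin n → ℝ) :
    0 ≤ ∑ i, x i * (x i - 2 * W i i * x i + ∑ j, W i j * x j) := by
  have h2 : (2:ℝ) * ∑ i, x i * (x i - 2 * W i i * x i + ∑ j, W i j * x j)
      = ∑ i, ∑ j, (if i = j then 0 else W i j * (x i + x j)^2) := by
    have expand : ∀ i : Fin n, ∑ j, (if i = j then (0:ℝ) else W i j * (x i + x j)^2)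
        = (∑ j, W i j * (x i + x j)^2) - W i i * (x i + x i)^2 := by
      intro i
      have h : ∀ j, (if i = j then (0:ℝ) else W i j * (x i + x j)^2)
          = W i j * (x i + x j)^2 - (if i = j then W i j * (x i + x j)^2 else 0) := by
        intro j; by_cases h : i = j <;> simp [h]
      simp_rw [h, Finset.sum_sub_distrib, Finset.sum_ite_eq, Finset.mem_univ, if_true]
    simp_rw [expand, Finset.sum_sub_distrib]
    have hA : ∑ i, ∑ j, W i j * (x i + x j)^2
        = (∑ i, x i^2) + 2 * (∑ i, x i * ∑ j, W i j * x j) + (∑ i, x i^2) := by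
      have e : ∀ i j, W i j * (x i + x j)^2
          = W i j * x i^2 + 2 * (x i * (W i j * x j)) + W i j * x j^2 := fun i j => by ring
      simp_rw [e, Finset.sum_add_distrib]
      congr 1
      · congr 1
        · refine Finset.sum_congr rfl fun i _ => ?_
          rw [← Finset.sum_mul, hr, one_mul]
        · rw [Finset.mul_sum]
          refine Finset.sum_congr rfl fun i _ => ?_
          rw [Finset.mul_sum, Finset.mul_sum]
      · exact sum_col_aux n W hs hr (fun j => x j^2)
    rw [hA]
    have hB : ∑ i, W i i * (x i + x i)^2 = 4 * ∑ i, W i i * x i^2 := by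
      rw [Finset.mul_sum]
      exact Finset.sum_congr rfl fun i _ => by ring
    rw [hB]
    have hL : ∑ i, x i * (x i - 2 * W i i * x i + ∑ j, W i j * x j)
        = ((∑ i, x i^2) - 2 * ∑ i, W i i * x i^2) + ∑ i, x i * ∑ j, W i j * x j := by
      simp_rw [mul_add, mul_sub, Finset.sum_add_distrib, Finset.sum_sub_distrib]
      congr 1
      congr 1
      · exact Finset.sum_congr rfl fun i _ => by ring
      · rw [Finset.mul_sum]
        exact Finset.sum_congr rfl fun i _ => by ring
    rw [hL]
    ring
  have hnonneg : 0 ≤ ∑ i, ∑ j, (if i = j then (0:ℝ) else W i j * (x i + x j)^2) := by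
    refine Finset.sum_nonneg fun i _ => Finset.sum_nonneg fun j _ => ?_
    by_cases h : i = j
    · simp [h]
    · simp only [h, if_false]
      exact mul_nonneg (hnn i j) (sq_nonneg _)
  nlinarith [h2, hnonneg]

/-- The matrix `B = I - 2Z_d + Z` is positive semidefinite when `W` is
symmetric, row stochastic with nonnegative entries and `w_{ii} ≥ 1/2` for all `i`. -/
theorem B_posSemidef
    (n p : ℕ) (W : Matrix (Fin n) (Fin n) ℝ)
    (hWsymm : W.IsSymm) (hWrow : ∀ i, ∑ j, W i j = 1) (hWnonneg : ∀ i j, 0 ≤ W i j)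
    (hWdiag : ∀ i, (1 : ℝ) / 2 ≤ W i i) :
    let Z : Matrix (Fin n × Fin p) (Fin n × Fin p) ℝ := W ⊗ₖ (1 : Matrix (Fin p) (Fin p) ℝ)
    let Zd : Matrix (Fin n × Fin p) (Fin n × Fin p) ℝ :=
      (Matrix.diagonal fun i => W i i) ⊗ₖ (1 : Matrix (Fin p) (Fin p) ℝ)
    ((1 : Matrix (Fin n × Fin p) (Fin n × Fin p) ℝ) - (2 : ℝ) • Zd + Z).PosSemidef := by
  intro Z Zd
  have hs : ∀ i j, W j i = W i j := fun i j => hWsymm.apply i j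
  set B := (1 : Matrix (Fin n × Fin p) (Fin n × Fin p) ℝ) - (2 : ℝ) • Zd + Z with hB
  have hBapp : ∀ i j k l, B (i, k) (j, l)
      = (if k = l then ((if i = j then (1:ℝ) else 0) - 2 * (if i = j then W i i else 0) + W i j)
         else 0) := by
    intro i j k l
    simp only [hB, Z, Zd, Matrix.add_apply, Matrix.sub_apply, Matrix.smul_apply,
      Matrix.kronecker_apply, Matrix.one_apply, Matrix.diagonal_apply, Prod.mk.injEq,
      smul_eq_mul]
    by_cases hkl : k = l <;> by_cases hij : i = j <;> simp [hkl, hij] <;> ring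
  rw [Matrix.posSemidef_iff_dotProduct_mulVec]
  constructor
  · -- Hermitian
    ext ⟨i, k⟩ ⟨j, l⟩
    simp only [Matrix.conjTranspose_apply, star, hBapp]
    by_cases hkl : k = l <;> by_cases hij : i = j <;>
      simp [hkl, hij, eq_comm, hs i j]
  · intro x
    have key : star x ⬝ᵥ B *ᵥ x
        = ∑ k : Fin p, ∑ i, (fun i => x (i, k)) i *
            ((fun i => x (i, k)) i - 2 * W i i * (fun i => x (i, k)) i
              + ∑ j, W i j * (fun i => x (i, k)) j) := by
      simp only [dotProduct, mulVec, star, Pi.star_apply, star_trivial]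
      rw [Fintype.sum_prod_type, Finset.sum_comm]
      refine Finset.sum_congr rfl fun k _ => Finset.sum_congr rfl fun i _ => ?_
      rw [show (∑ j : Fin n × Fin p, B (i, k) j * x j)
          = ∑ a : Fin n, ∑ b : Fin p, B (i, k) (a, b) * x (a, b) from by
        rw [Fintype.sum_prod_type]]
      have hinner : ∀ a : Fin n, ∑ b : Fin p, B (i, k) (a, b) * x (a, b)
          = ((if i = a then (1:ℝ) else 0) - 2 * (if i = a then W i i else 0) + W i a)
              * x (a, k) := by
        intro a
        have : ∀ b : Fin p, B (i, k) (a, b) * x (a, b)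
            = (if k = b then ((if i = a then (1:ℝ) else 0)
                - 2 * (if i = a then W i i else 0) + W i a) * x (a, b) else 0) := by
          intro b
          rw [hBapp]
          by_cases hkb : k = b <;> simp [hkb]
        simp_rw [this, Finset.sum_ite_eq, Finset.mem_univ, if_true]
      simp_rw [hinner]
      have : ∑ a : Fin n, ((if i = a then (1:ℝ) else 0)
            - 2 * (if i = a then W i i else 0) + W i a) * x (a, k)
          = x (i, k) - 2 * W i i * x (i, k) + ∑ a, W i a * x (a, k) := by
        simp_rw [add_mul, sub_mul, mul_ite, mul_zero, ite_mul,
          zero_mul, one_mul, Finset.sum_add_distrib, Finset.sum_sub_distrib,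
          Finset.sum_ite_eq, Finset.mem_univ, if_true]
      rw [this]
    rw [key]
    exact Finset.sum_nonneg fun k _ =>
      quad_nonneg n W hs hWrow hWnonneg (fun i => x (i, k))
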